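/- Under the hypotheses of Theorem 1 (A strictly upper triangular integer matrix with B = (I-A)^{-1} nonnegative), for each n the number of λ ∈ P_A of weight n satisfying additionally λ_1 = Σ_{j≥2} A[1,j]·λ_j (equality in the first constraint) equals the number of (s_2,...,s_k) ∈ ℕ^{k-1} with b_2·s_2 + ... + b_k·s_k = n, where b_i is the i-th column sum of B. -/

import Mathlib

open Matrix Finset

/-- Entries of powers of a strictly upper triangular matrix vanish below the `m`-th
superdiagonal. -/
lemma strict_pow_entry {k : ℕ} (A : Matrix (Fin k) (Fin k) ℤ)
    (hA : ∀ i j : Fin k, j ≤ i → A i j = 0) :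
    ∀ m : ℕ, ∀ i j : Fin k, (j : ℕ) < (i : ℕ) + m → (A ^ m) i j = 0 := by
  intro m
  induction m with
  | zero =>
    intro i j hij
    simp only [Nat.add_zero] at hij
    rw [pow_zero]
    exact Matrix.one_apply_ne (by intro h; subst h; exact lt_irrefl _ hij)
  | succ m ih =>
    intro i j hij
    rw [pow_succ, Matrix.mul_apply]
    apply Finset.sum_eq_zero
    intro l _
    by_cases hl : (l : ℕ) < (i : ℕ) + m
    · rw [ih i l hl, zero_mul]
    · push_neg at hl
      have : (j : ℕ) ≤ (l : ℕ) := by omega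
      rw [hA l j (by exact_mod_cast this), mul_zero]

set_option maxHeartbeats 1600000 in
theorem stmt_4 (k n : ℕ) (hk : 0 < k) (A : Matrix (Fin k) (Fin k) ℤ)
    (hA : ∀ i j : Fin k, j ≤ i → A i j = 0)
    (hB : ∀ i j : Fin k, 0 ≤ (∑ m ∈ Finset.range k, A ^ m) i j) :
    {lam : Fin k → ℤ | (∀ i, ∑ j, A i j * lam j ≤ lam i) ∧
      lam ⟨0, hk⟩ = ∑ j, A ⟨0, hk⟩ j * lam j ∧ ∑ i, lam i = (n : ℤ)}.ncard =
    {s : Fin k → ℕ | s ⟨0, hk⟩ = 0 ∧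
      ∑ i, (∑ j, (∑ m ∈ Finset.range k, A ^ m) j i) * (s i : ℤ) = (n : ℤ)}.ncard := by
  classical
  set B : Matrix (Fin k) (Fin k) ℤ := ∑ m ∈ Finset.range k, A ^ m with hBdef
  have hnil : A ^ k = 0 := by
    ext i j
    exact strict_pow_entry A hA k i j (by omega)
  have h1 : B * (1 - A) = 1 := by
    have := geom_sum_mul A k
    rw [hnil, zero_sub] at this
    have h : B * (A - 1) = -1 := by rw [hBdef, this]
    calc B * (1 - A) = -(B * (A - 1)) := by rw [← neg_sub A 1, mul_neg]
    _ = 1 := by rw [h, neg_neg]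
  have h2 : (1 - A) * B = 1 := by
    have := mul_geom_sum A k
    rw [hnil, zero_sub] at this
    have h : (A - 1) * B = -1 := by rw [hBdef, this]
    calc (1 - A) * B = -((A - 1) * B) := by rw [← neg_sub A 1, neg_mul]
    _ = 1 := by rw [h, neg_neg]
  have hmv : ∀ (M : Matrix (Fin k) (Fin k) ℤ) (v : Fin k → ℤ) (i : Fin k),
      (M *ᵥ v) i = ∑ j, M i j * v j := by
    intro M v i; rfl
  -- key inversion facts
  have hBA : ∀ v : Fin k → ℤ, B *ᵥ ((1 - A) *ᵥ v) = v := by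
    intro v; rw [Matrix.mulVec_mulVec, h1, Matrix.one_mulVec]
  have hAB : ∀ v : Fin k → ℤ, (1 - A) *ᵥ (B *ᵥ v) = v := by
    intro v; rw [Matrix.mulVec_mulVec, h2, Matrix.one_mulVec]
  have hsubv : ∀ (v : Fin k → ℤ) (i : Fin k),
      ((1 - A) *ᵥ v) i = v i - ∑ j, A i j * v j := by
    intro v i
    rw [Matrix.sub_mulVec, Matrix.one_mulVec]
    simp [hmv]
  -- sum of entries of B *ᵥ v equals weighted column sums
  have hsumB : ∀ v : Fin k → ℤ,
      ∑ i, (B *ᵥ v) i = ∑ i, (∑ j, B j i) * v i := by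
    intro v
    simp only [hmv]
    rw [Finset.sum_comm]
    congr 1
    ext i
    rw [Finset.sum_mul]
  set f : (Fin k → ℤ) → (Fin k → ℕ) := fun lam i => (((1 - A) *ᵥ lam) i).toNat with hf
  set S1 := {lam : Fin k → ℤ | (∀ i, ∑ j, A i j * lam j ≤ lam i) ∧
      lam ⟨0, hk⟩ = ∑ j, A ⟨0, hk⟩ j * lam j ∧ ∑ i, lam i = (n : ℤ)} with hS1
  set S2 := {s : Fin k → ℕ | s ⟨0, hk⟩ = 0 ∧
      ∑ i, (∑ j, B j i) * (s i : ℤ) = (n : ℤ)} with hS2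
  have hcoe : ∀ lam ∈ S1, (fun i => ((f lam i : ℤ))) = (1 - A) *ᵥ lam := by
    intro lam hlam
    ext i
    simp only [hf]
    rw [Int.toNat_of_nonneg]
    rw [hsubv]
    exact sub_nonneg.mpr (hlam.1 i)
  have himg : S2 = f '' S1 := by
    apply Set.Subset.antisymm
    · rintro s ⟨h0, hs⟩
      refine ⟨B *ᵥ (fun i => (s i : ℤ)), ⟨?_, ?_, ?_⟩, ?_⟩
      · intro i
        have h := congrFun (hAB (fun i => (s i : ℤ))) i
        rw [hsubv] at h
        have h2 : (0:ℤ) ≤ (s i : ℤ) := Int.natCast_nonneg _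
        linarith
      · have h := congrFun (hAB (fun i => (s i : ℤ))) ⟨0, hk⟩
        rw [hsubv] at h
        simp only [h0, Nat.cast_zero] at h
        linarith
      · rw [hsumB]
        exact hs
      · ext i
        simp only [hf, hAB]
        exact Int.toNat_natCast _
    · rintro s ⟨lam, hlam, rfl⟩
      obtain ⟨hc, he, hsm⟩ := hlam
      constructor
      · simp only [hf]
        rw [hsubv, he]
        simp
      · have hc2 := hcoe lam ⟨hc, he, hsm⟩
        have h3 := hsumB (fun i => ((f lam i : ℤ)))
        rw [hc2, hBA] at h3
        rw [← h3]
        exact hsm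
  have hinj : Set.InjOn f S1 := by
    intro x hx y hy hxy
    have h1 : (fun i => ((f x i : ℤ))) = (fun i => ((f y i : ℤ))) := by rw [hxy]
    rw [hcoe x hx, hcoe y hy] at h1
    have := congrArg (fun v => B *ᵥ v) h1
    simpa only [hBA] using this
  rw [himg, Set.ncard_image_of_injOn hinj]
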